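/- Let q ≥ l ≥ 3 with q = p^d for a prime p. Then the rank over Q of the matrix M (rows: coefficient vectors of (1+x)^l - 1, x(1+x)^l, ..., x^{q-l-1}(1+x)^l, x^{q-l}(1+x)^l - x^q) is strictly greater than its rank over F_p; in fact rank_Q(M) - rank_{F_p}(M) = 1. -/

import Mathlib

open Polynomial

/-- The `i`-th row polynomial of the paper's matrix `M` (equation (3)):
`(1+x)^l - 1` for `i = 0`, `x^(q-l)(1+x)^l - x^q` for `i = q-l`, and
`x^i (1+x)^l` for `0 < i < q-l`. -/
noncomputable def rowPoly (R : Type*) [CommRing R] (q l i : ℕ) : R[X] :=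
  if i = 0 then (1 + X) ^ l - 1
  else if i = q - l then X ^ (q - l) * (1 + X) ^ l - X ^ q
  else X ^ i * (1 + X) ^ l

/-- The paper's `(q-l+1) × (q-1)` matrix `M`: the `(i, j)` entry is the
coefficient of `x^(j+1)` in the `i`-th row polynomial, i.e. the rows are the
coefficient vectors (in degrees `1` through `q-1`) of the polynomials
`(1+x)^l - 1, x(1+x)^l, ..., x^(q-l-1)(1+x)^l, x^(q-l)(1+x)^l - x^q`. -/
noncomputable def paperM (R : Type*) [CommRing R] (q l : ℕ) :
    Matrix (Fin (q - l + 1)) (Fin (q - 1)) R :=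
  fun i j => (rowPoly R q l i).coeff ((j : ℕ) + 1)

section Aux

variable {R S : Type*} [CommRing R] [CommRing S]

lemma rowPoly_map (f : R →+* S) (q l i : ℕ) :
    (rowPoly R q l i).map f = rowPoly S q l i := by
  unfold rowPoly; split_ifs <;> simp

lemma paperM_int_map (K : Type*) [CommRing K] (q l : ℕ) :
    (paperM ℤ q l).map (Int.cast : ℤ → K) = paperM K q l := by
  ext i j
  have := rowPoly_map (Int.castRingHom K) q l i
  simp only [Matrix.map_apply, paperM]
  rw [← this, coeff_map]
  rfl

lemma rowPoly_coeff_zero {q l : ℕ} (hq : q ≠ 0) (i : ℕ) :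
    (rowPoly R q l i).coeff 0 = 0 := by
  rw [coeff_zero_eq_eval_zero]; unfold rowPoly
  split_ifs with h0 h1
  · simp
  · have : q - l ≠ 0 := h1 ▸ h0
    simp [zero_pow this, zero_pow hq]
  · simp [zero_pow h0]

lemma one_add_X_pow_natDegree_le (n : ℕ) : ((1 + X : R[X]) ^ n).natDegree ≤ n := by
  refine (natDegree_pow_le).trans ?_
  have : (1 + X : R[X]).natDegree ≤ 1 :=
    (natDegree_add_le _ _).trans (by simpa using natDegree_X_le)
  calc n * (1 + X : R[X]).natDegree ≤ n * 1 := Nat.mul_le_mul_left n this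
    _ = n := Nat.mul_one n

lemma rowPoly_natDegree_le {q l i : ℕ} (hlq : l ≤ q) (hi : i ≤ q - l) :
    (rowPoly R q l i).natDegree ≤ q := by
  unfold rowPoly
  split_ifs
  · refine (natDegree_sub_le _ _).trans
      (max_le ((one_add_X_pow_natDegree_le l).trans hlq) (by simp))
  · refine (natDegree_sub_le _ _).trans (max_le ?_ ?_)
    · refine (natDegree_mul_le).trans ?_
      have := one_add_X_pow_natDegree_le (R := R) l
      have hX : (X ^ (q - l) : R[X]).natDegree ≤ q - l := natDegree_X_pow_le _
      omega
    · exact natDegree_X_pow_le _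
  · refine (natDegree_mul_le).trans ?_
    have := one_add_X_pow_natDegree_le (R := R) l
    have hX : (X ^ i : R[X]).natDegree ≤ i := natDegree_X_pow_le _
    omega

lemma rowPoly_eq {q l : ℕ} (hm : q - l ≠ 0) (i : Fin (q - l + 1)) :
    rowPoly R q l i = X ^ (i : ℕ) * (1 + X) ^ l
      - (if (i : ℕ) = 0 then 1 else 0) - (if (i : ℕ) = q - l then X ^ q else 0) := by
  unfold rowPoly
  rcases eq_or_ne (i : ℕ) 0 with h0 | h0
  · rw [if_pos h0, if_pos h0, if_neg (by omega : ¬ (i : ℕ) = q - l), h0]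
    ring
  · rw [if_neg h0, if_neg h0]
    rcases eq_or_ne (i : ℕ) (q - l) with h1 | h1
    · rw [if_pos h1, if_pos h1, h1]; ring
    · rw [if_neg h1, if_neg h1]; ring

lemma sum_rowPoly {q l : ℕ} (hm : q - l ≠ 0) (c : Fin (q - l + 1) → R) :
    ∑ i, c i • rowPoly R q l i
      = (∑ i : Fin (q - l + 1), C (c i) * X ^ (i : ℕ)) * (1 + X) ^ l
        - C (c 0) - C (c (Fin.last (q - l))) * X ^ q := by
  have h1 : ∑ i : Fin (q - l + 1), c i • (if (i : ℕ) = 0 then (1 : R[X]) else 0)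
      = C (c 0) := by
    rw [Finset.sum_eq_single (0 : Fin (q - l + 1))]
    · simp [smul_eq_C_mul]
    · intro b _ hb
      rw [if_neg (fun h => hb (Fin.ext (by rw [h, Fin.val_zero]))), smul_zero]
    · simp
  have h2 : ∑ i : Fin (q - l + 1), c i • (if (i : ℕ) = q - l then (X ^ q : R[X]) else 0)
      = C (c (Fin.last (q - l))) * X ^ q := by
    rw [Finset.sum_eq_single (Fin.last (q - l))]
    · simp [smul_eq_C_mul, Fin.val_last]
    · intro b _ hb
      rw [if_neg (by simpa [Fin.ext_iff, Fin.val_last] using hb), smul_zero]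
    · simp
  simp only [rowPoly_eq hm, smul_sub, Finset.sum_sub_distrib, h1, h2]
  congr 1
  congr 1
  rw [Finset.sum_mul]
  refine Finset.sum_congr rfl fun i _ => ?_
  rw [smul_eq_C_mul]; ring

lemma coeff_g {n : ℕ} (c : Fin n → R) (i : Fin n) :
    (∑ k, C (c k) * X ^ (k : ℕ)).coeff (i : ℕ) = c i := by
  rw [finset_sum_coeff, Finset.sum_eq_single i]
  · simp
  · intro b _ hb
    rw [coeff_C_mul, coeff_X_pow, if_neg (by simpa [Fin.ext_iff, eq_comm] using hb), mul_zero]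
  · simp

variable {K : Type*} [Field K]

lemma paperM_sum_coeff {q l : ℕ} (c : Fin (q - l + 1) → K) (n : ℕ) :
    (∑ i, c i • rowPoly K q l i).coeff n = ∑ i, c i * (rowPoly K q l i).coeff n := by
  rw [finset_sum_coeff]
  simp [coeff_smul, smul_eq_mul]

lemma key {q l : ℕ} (hl : 3 ≤ l) (hlq : l ≤ q) (hm : q - l ≠ 0)
    (c : Fin (q - l + 1) → K)
    (h : ∑ i, c i • paperM K q l i = (0 : Fin (q - 1) → K)) :
    ∃ b : K, (∑ i : Fin (q - l + 1), C (c i) * X ^ (i : ℕ)) * (1 + X) ^ l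
        = C (c 0) + C b * X ^ q := by
  set P : K[X] := ∑ i, c i • rowPoly K q l i with hP
  have hq3 : 3 < q := by omega
  have hco : ∀ n, n ≠ q → P.coeff n = 0 := by
    intro n hn
    rcases Nat.lt_or_ge n 1 with h0 | h1
    · interval_cases n
      rw [hP, paperM_sum_coeff]
      simp [rowPoly_coeff_zero (show q ≠ 0 by omega)]
    · rcases Nat.lt_or_ge n q with hnq | hnq
      · have hj := congrFun h ⟨n - 1, by omega⟩
        simp only [Finset.sum_apply, Pi.smul_apply, Pi.zero_apply, smul_eq_mul] at hj
        rw [hP, paperM_sum_coeff]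
        have : n - 1 + 1 = n := by omega
        simpa [paperM, this] using hj
      · have hnq' : q < n := by omega
        rw [hP, paperM_sum_coeff]
        refine Finset.sum_eq_zero fun i _ => ?_
        rw [coeff_eq_zero_of_natDegree_lt, mul_zero]
        exact lt_of_le_of_lt (rowPoly_natDegree_le hlq (by omega : (i : ℕ) ≤ q - l)) hnq'
  have hPX : P = C (P.coeff q) * X ^ q := by
    ext n
    rw [coeff_C_mul, coeff_X_pow]
    rcases eq_or_ne n q with rfl | hn
    · simp
    · rw [if_neg hn, mul_zero, hco n hn]
  refine ⟨P.coeff q + c (Fin.last (q - l)), ?_⟩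
  have hs := sum_rowPoly hm c
  rw [← hP, hPX] at hs
  rw [C_add, add_mul]
  linear_combination -hs

lemma indep_zero {q l : ℕ} (hl : 3 ≤ l) (hlq : l ≤ q) (hm : q - l ≠ 0)
    (c : Fin (q - l + 1) → K) (hc0 : c 0 = 0)
    (h : ∑ i, c i • paperM K q l i = (0 : Fin (q - 1) → K)) :
    c = 0 := by
  obtain ⟨b, hb⟩ := key hl hlq hm c h
  rw [hc0, map_zero, zero_add] at hb
  have hev := congrArg (eval (-1)) hb
  simp only [eval_mul, eval_pow, eval_add, eval_one, eval_X, eval_C] at hev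
  rw [add_neg_cancel, zero_pow (by omega : l ≠ 0), mul_zero] at hev
  have hb0 : b = 0 := by
    rcases mul_eq_zero.mp hev.symm with h' | h'
    · exact h'
    · exact absurd (pow_eq_zero_iff (by omega : q ≠ 0) |>.mp h') (by simp)
  rw [hb0, map_zero, zero_mul] at hb
  have hg : (∑ i : Fin (q - l + 1), C (c i) * X ^ (i : ℕ)) = 0 := by
    rcases mul_eq_zero.mp hb with h' | h'
    · exact h'
    · exact absurd h' (pow_ne_zero _ (by
        intro hx
        have := congrArg (eval 0) hx
        simp at this))
  funext i
  have := coeff_g c i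
  rw [hg] at this
  simpa using this.symm

lemma indep_rat {q l : ℕ} (hl : 3 ≤ l) (hlq : l ≤ q) (hm : q - l ≠ 0)
    (c : Fin (q - l + 1) → ℚ)
    (h : ∑ i, c i • paperM ℚ q l i = (0 : Fin (q - 1) → ℚ)) :
    c = 0 := by
  obtain ⟨b, hb⟩ := key hl hlq hm c h
  have hder := congrArg (fun p => eval (-1) (derivative p)) hb
  simp only [derivative_mul, derivative_pow, derivative_add, derivative_one, derivative_X,
    derivative_C, eval_add, eval_mul, eval_pow, eval_C, eval_X, eval_one, zero_add, mul_one,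
    eval_natCast] at hder
  rw [add_neg_cancel] at hder
  rw [zero_pow (by omega : l ≠ 0), zero_pow (by omega : l - 1 ≠ 0)] at hder
  simp only [mul_zero, zero_mul, add_zero, zero_add] at hder
  have hb0 : b = 0 := by
    have hq0 : ((q : ℚ)) ≠ 0 := Nat.cast_ne_zero.mpr (by omega)
    have hpow : ((-1 : ℚ)) ^ (q - 1) ≠ 0 := pow_ne_zero _ (by norm_num)
    simp only [eval_zero, zero_mul, zero_add] at hder
    exact (mul_eq_zero.mp hder.symm).resolve_right (mul_ne_zero hq0 hpow)
  rw [hb0, map_zero, zero_mul, add_zero] at hb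
  have hev := congrArg (eval (-1)) hb
  simp only [eval_mul, eval_pow, eval_add, eval_one, eval_X, eval_C] at hev
  rw [add_neg_cancel, zero_pow (by omega : l ≠ 0), mul_zero] at hev
  exact indep_zero hl hlq hm c hev.symm h

lemma dep_poly (p d q l : ℕ) (hp : p.Prime) (hq : q = p ^ d)
    (hlq : l ≤ q) (hm : q - l ≠ 0) :
    ∑ i : Fin (q - l + 1), (((q - l).choose (i : ℕ) : ZMod p)) • rowPoly (ZMod p) q l i = 0 := by
  haveI : Fact p.Prime := ⟨hp⟩
  rw [sum_rowPoly hm]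
  have hg : (∑ i : Fin (q - l + 1), C (((q - l).choose (i : ℕ) : ZMod p)) * X ^ (i : ℕ))
      = (1 + X) ^ (q - l) := by
    have hc : (1 + X : (ZMod p)[X]) = X + 1 := add_comm _ _
    rw [hc, add_pow,
      Fin.sum_univ_eq_sum_range (fun k => C (((q - l).choose k : ZMod p)) * X ^ k)]
    refine Finset.sum_congr rfl fun k _ => ?_
    simp [C_eq_natCast, mul_comm]
  rw [hg, ← pow_add, Nat.sub_add_cancel hlq]
  have hchar : (1 + X : (ZMod p)[X]) ^ q = 1 + X ^ q := by
    haveI : ExpChar ((ZMod p)[X]) p := by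
      haveI : CharP ((ZMod p)[X]) p := Polynomial.instCharP p
      exact ExpChar.prime hp
    rw [hq, add_pow_char_pow]
    simp
  rw [hchar]
  simp [Nat.choose_self, Fin.val_last]

lemma dep_mat (p d q l : ℕ) (hp : p.Prime) (hq : q = p ^ d)
    (hlq : l ≤ q) (hm : q - l ≠ 0) :
    ∑ i : Fin (q - l + 1), (((q - l).choose (i : ℕ) : ZMod p)) • paperM (ZMod p) q l i
      = (0 : Fin (q - 1) → ZMod p) := by
  haveI : Fact p.Prime := ⟨hp⟩
  funext j
  have hpoly := dep_poly p d q l hp hq hlq hm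
  have := congrArg (fun P => Polynomial.coeff P ((j : ℕ) + 1)) hpoly
  simp only [coeff_zero] at this
  rw [paperM_sum_coeff] at this
  simpa [paperM, Finset.sum_apply, Pi.smul_apply, smul_eq_mul] using this

end Aux

/-- For `p` prime, `q = p^d`, `3 ≤ l ≤ q`, the rank over `ℚ`
of the integer matrix `M` is strictly greater than its rank over `F_p`; in fact
the difference is exactly `1`. -/
theorem paperM_rank_drop (p d l q : ℕ) (hp : p.Prime) (hd : 0 < d)
    (hq : q = p ^ d) (hl : 3 ≤ l) (hlq : l ≤ q) :
    (((paperM ℤ q l).map (Int.cast : ℤ → ZMod p)).rank <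
      ((paperM ℤ q l).map (Int.cast : ℤ → ℚ)).rank) ∧
    ((paperM ℤ q l).map (Int.cast : ℤ → ℚ)).rank =
      ((paperM ℤ q l).map (Int.cast : ℤ → ZMod p)).rank + 1 := by
  haveI : Fact p.Prime := ⟨hp⟩
  have hq3 : 3 ≤ q := le_trans hl hlq
  rw [paperM_int_map (ZMod p) q l, paperM_int_map ℚ q l]
  by_cases hm : q - l = 0
  · -- l = q; single row, zero mod p, nonzero over ℚ
    have hlq' : l = q := by omega
    have hrow : ∀ (R : Type) [CommRing R] (i : Fin (q - l + 1)) (j : Fin (q - 1)),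
        paperM R q l i j = (q.choose ((j : ℕ) + 1) : R) := by
      intro R _ i j
      have hi : (i : ℕ) = 0 := by omega
      simp only [paperM, rowPoly, hi, if_pos rfl, if_true, eq_self_iff_true]
      rw [coeff_sub, hlq']
      have : (1 + X : R[X]) = X + 1 := add_comm _ _
      rw [this, coeff_X_add_one_pow, coeff_one, if_neg (by omega)]
      simp
    have hzero : paperM (ZMod p) q l = 0 := by
      ext i j
      rw [hrow]
      have hdvd : p ∣ q.choose ((j : ℕ) + 1) := by
        have hgen : ∀ k : ℕ, k ≠ 0 → k < q → p ∣ q.choose k := by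
          intro k h1 h2
          rw [hq] at h2 ⊢
          exact Nat.Prime.dvd_choose_pow hp h1 (by omega)
        exact hgen _ (by omega) (by have := j.isLt; omega)
      simpa using (ZMod.natCast_eq_zero_iff _ p).mpr hdvd
    have hrank0 : (paperM (ZMod p) q l).rank = 0 := by rw [hzero, Matrix.rank_zero]
    have hrank1 : (paperM ℚ q l).rank = 1 := by
      rw [Matrix.rank_eq_finrank_span_row, Matrix.row]
      have hsing : Set.range (paperM ℚ q l) = {paperM ℚ q l ⟨0, by omega⟩} := by
        apply Set.Subset.antisymm
        · rintro _ ⟨i, rfl⟩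
          have : i = ⟨0, by omega⟩ := by
            apply Fin.ext; omega
          simp [this]
        · rintro _ rfl
          exact ⟨_, rfl⟩
      rw [hsing]
      refine finrank_span_singleton ?_
      intro h0
      have h1 := congrFun h0 ⟨0, by omega⟩
      rw [hrow] at h1
      have h2 : ((q.choose (((⟨0, by omega⟩ : Fin (q - 1)) : ℕ) + 1) : ℚ)) = 0 := h1
      have h3 : q.choose 1 = 0 := by exact_mod_cast h2
      rw [Nat.choose_one_right] at h3
      omega
    rw [hrank0, hrank1]
    omega
  · -- main case : q - l ≥ 1
    -- rank over ℚ is q - l + 1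
    have liQ : LinearIndependent ℚ (paperM ℚ q l) := by
      refine Fintype.linearIndependent_iff.mpr ?_
      intro g hg i
      have := indep_rat hl hlq hm g hg
      rw [this]; rfl
    have hrQ : (paperM ℚ q l).rank = q - l + 1 := by
      rw [Matrix.rank_eq_finrank_span_row, Matrix.row, finrank_span_eq_card liQ, Fintype.card_fin]
    -- rank over ZMod p is q - l
    have liP : LinearIndependent (ZMod p)
        (fun i : Fin (q - l) => paperM (ZMod p) q l i.succ) := by
      refine Fintype.linearIndependent_iff.mpr ?_
      intro g hg i
      set c : Fin (q - l + 1) → ZMod p :=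
        fun i => if h : i = 0 then 0 else g (i.pred h) with hc
      have hsum : ∑ i, c i • paperM (ZMod p) q l i = (0 : Fin (q - 1) → ZMod p) := by
        rw [Fin.sum_univ_succ]
        have hc0 : c 0 = 0 := by simp [hc]
        rw [hc0, zero_smul, zero_add]
        have : ∀ i : Fin (q - l), c i.succ = g i := by
          intro i
          simp [hc, Fin.succ_ne_zero]
        simpa [this] using hg
      have := indep_zero hl hlq hm c (by simp [hc]) hsum
      have := congrFun this i.succ
      simpa [hc, Fin.succ_ne_zero] using this
    have hspan : Submodule.span (ZMod p) (Set.range (paperM (ZMod p) q l))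
        = Submodule.span (ZMod p)
            (Set.range (fun i : Fin (q - l) => paperM (ZMod p) q l i.succ)) := by
      apply le_antisymm
      · rw [Submodule.span_le]
        rintro _ ⟨i, rfl⟩
        induction i using Fin.cases with
        | zero =>
          -- row 0 is minus the combination of the other rows
          have hdep := dep_mat p d q l hp hq hlq hm
          rw [Fin.sum_univ_succ] at hdep
          simp only [Fin.val_zero, Nat.choose_zero_right, Nat.cast_one, one_smul] at hdep
          have : paperM (ZMod p) q l 0
              = -∑ i : Fin (q - l), (((q - l).choose (i.succ : ℕ) : ZMod p)) •
                  paperM (ZMod p) q l i.succ := by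
            rw [eq_neg_iff_add_eq_zero]
            exact hdep
          rw [this]
          refine Submodule.neg_mem _ (Submodule.sum_mem _ fun i _ => ?_)
          exact Submodule.smul_mem _ _ (Submodule.subset_span ⟨i, rfl⟩)
        | succ i =>
          exact Submodule.subset_span ⟨i, rfl⟩
      · exact Submodule.span_mono (by rintro _ ⟨i, rfl⟩; exact ⟨i.succ, rfl⟩)
    have hrP : (paperM (ZMod p) q l).rank = q - l := by
      rw [Matrix.rank_eq_finrank_span_row, Matrix.row, hspan, finrank_span_eq_card liP, Fintype.card_fin]
    rw [hrQ, hrP]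
    omega
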